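/- Let a, c ∈ (−1,1) \ {0} and set ā² = 1 − a², c̄² = 1 − c². For the confounder SCM with these coefficients, the population R² of the hub node B given (A, C) is 1 − ā²c̄²/(ā² + c̄² − ā²c̄²), and this expression tends to 1 as either ā → 0 or c̄ → 0, i.e., the R² of the hub of a confounder can be made arbitrarily close to 1. -/

import Mathlib

open MeasureTheory ProbabilityTheory Filter Set
open scoped ENNReal NNReal Real

section GaussAux
open Real

lemma aux_gaussianReal_eq_withDensity :
    gaussianReal 0 1 = volume.withDensity
      (fun x => ((gaussianPDFReal 0 1 x).toNNReal : ℝ≥0∞)) := by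
  rw [gaussianReal_of_var_ne_zero _ one_ne_zero]
  rfl

lemma aux_gauss_integral_eq (g : ℝ → ℝ) :
    ∫ x, g x ∂(gaussianReal 0 1) = ∫ x, gaussianPDFReal 0 1 x * g x := by
  rw [aux_gaussianReal_eq_withDensity,
    integral_withDensity_eq_integral_smul
      (measurable_gaussianPDFReal 0 1).real_toNNReal g]
  congr 1; ext x
  rw [NNReal.smul_def, smul_eq_mul, Real.coe_toNNReal _ (gaussianPDFReal_nonneg 0 1 x)]

lemma aux_gauss_integrable_iff (g : ℝ → ℝ) :
    Integrable g (gaussianReal 0 1) ↔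
      Integrable (fun x => g x * gaussianPDFReal 0 1 x) := by
  rw [aux_gaussianReal_eq_withDensity,
    integrable_withDensity_iff_integrable_coe_smul
      (measurable_gaussianPDFReal 0 1).real_toNNReal]
  apply integrable_congr
  filter_upwards with x
  rw [smul_eq_mul, Real.coe_toNNReal _ (gaussianPDFReal_nonneg 0 1 x), mul_comm]

lemma aux_gaussianPDFReal_zero_one (x : ℝ) :
    gaussianPDFReal 0 1 x = (Real.sqrt (2 * π))⁻¹ * Real.exp (-(1/2) * x ^ 2) := by
  rw [gaussianPDFReal]
  push_cast
  rw [mul_one, sub_zero]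
  congr 1
  ring

lemma aux_integral_sq_exp :
    ∫ x : ℝ, x ^ 2 * Real.exp (-(1/2) * x ^ 2) = Real.sqrt (2 * π) := by
  have h1 : ∫ x : ℝ, |x| ^ 2 * Real.exp (-(1/2) * |x| ^ 2)
      = 2 * ∫ x in Ioi (0:ℝ), x ^ 2 * Real.exp (-(1/2) * x ^ 2) :=
    integral_comp_abs (f := fun t => t ^ 2 * Real.exp (-(1/2) * t ^ 2))
  simp only [sq_abs] at h1
  rw [h1]
  have h2 : ∫ x in Ioi (0:ℝ), x ^ 2 * Real.exp (-(1/2) * x ^ 2)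
      = ∫ x in Ioi (0:ℝ), x ^ (2:ℝ) * Real.exp (-(1/2) * x ^ (2:ℝ)) := by
    refine setIntegral_congr_fun measurableSet_Ioi (fun x hx => ?_)
    rw [show ((2:ℝ)) = ((2:ℕ):ℝ) by norm_num, Real.rpow_natCast]
  rw [h2, integral_rpow_mul_exp_neg_mul_rpow (by norm_num) (by norm_num) (by norm_num)]
  have hG : Real.Gamma ((2 + 1) / 2) = Real.sqrt π / 2 := by
    rw [show ((2:ℝ) + 1) / 2 = 1/2 + 1 by norm_num, Real.Gamma_add_one (by norm_num),
      Real.Gamma_one_half_eq]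
    ring
  rw [hG]
  have hpow : ((1:ℝ)/2) ^ (-((2:ℝ) + 1) / 2) = 2 * Real.sqrt 2 := by
    rw [show -((2:ℝ)+1)/2 = -(3/2) by norm_num, Real.rpow_neg (by norm_num),
      show ((1:ℝ)/2) = 2⁻¹ by norm_num, Real.inv_rpow (by norm_num), inv_inv,
      show ((3:ℝ)/2) = 1 + 1/2 by norm_num, Real.rpow_add (by norm_num), Real.rpow_one,
      ← Real.sqrt_eq_rpow]
  rw [hpow, Real.sqrt_mul (by norm_num)]
  ring

lemma aux_integral_lin_exp : ∫ x : ℝ, x * Real.exp (-(1/2) * x ^ 2) = 0 := by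
  have hme : MeasurableEmbedding (fun x : ℝ => -x) :=
    (Homeomorph.neg ℝ).isClosedEmbedding.measurableEmbedding
  have hneg := (Measure.measurePreserving_neg (volume : Measure ℝ)).integral_comp hme
    (fun t => t * Real.exp (-(1/2) * t ^ 2))
  simp only [neg_sq, neg_mul] at hneg
  rw [integral_neg] at hneg
  have : ∀ x : ℝ, -(1/2) * x ^ 2 = -(1/2 * x ^ 2) := fun x => by ring
  simp only [this]
  linarith

lemma aux_integrable_sq_exp :
    Integrable (fun x : ℝ => x ^ 2 * Real.exp (-(1/2) * x ^ 2)) := by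
  have h := integrable_rpow_mul_exp_neg_mul_sq (b := 1/2) (by norm_num) (s := 2) (by norm_num)
  refine h.congr ?_
  filter_upwards with x
  rw [show ((2:ℝ)) = ((2:ℕ):ℝ) by norm_num, Real.rpow_natCast]

lemma aux_sqrt_two_pi_pos : (0:ℝ) < Real.sqrt (2 * π) :=
  Real.sqrt_pos.mpr (by positivity)

lemma aux_gauss_integrable_sq : Integrable (fun x : ℝ => x ^ 2) (gaussianReal 0 1) := by
  rw [aux_gauss_integrable_iff]
  have : (fun x : ℝ => x ^ 2 * gaussianPDFReal 0 1 x)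
      = fun x => (Real.sqrt (2 * π))⁻¹ * (x ^ 2 * Real.exp (-(1/2) * x ^ 2)) := by
    ext x; rw [aux_gaussianPDFReal_zero_one]; ring
  rw [this]
  exact aux_integrable_sq_exp.const_mul _

lemma aux_gauss_integrable_id : Integrable (fun x : ℝ => x) (gaussianReal 0 1) := by
  rw [aux_gauss_integrable_iff]
  have : (fun x : ℝ => x * gaussianPDFReal 0 1 x)
      = fun x => (Real.sqrt (2 * π))⁻¹ * (x * Real.exp (-(1/2) * x ^ 2)) := by
    ext x; rw [aux_gaussianPDFReal_zero_one]; ring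
  rw [this]
  exact (integrable_mul_exp_neg_mul_sq (by norm_num)).const_mul _

lemma aux_gauss_moment2 : ∫ x, x ^ 2 ∂(gaussianReal 0 1) = 1 := by
  rw [aux_gauss_integral_eq]
  have : (fun x : ℝ => gaussianPDFReal 0 1 x * x ^ 2)
      = fun x => (Real.sqrt (2 * π))⁻¹ * (x ^ 2 * Real.exp (-(1/2) * x ^ 2)) := by
    ext x; rw [aux_gaussianPDFReal_zero_one]; ring
  rw [this, integral_const_mul, aux_integral_sq_exp]
  exact inv_mul_cancel₀ (ne_of_gt aux_sqrt_two_pi_pos)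

lemma aux_gauss_moment1 : ∫ x, x ∂(gaussianReal 0 1) = 0 := by
  rw [aux_gauss_integral_eq]
  have : (fun x : ℝ => gaussianPDFReal 0 1 x * x)
      = fun x => (Real.sqrt (2 * π))⁻¹ * (x * Real.exp (-(1/2) * x ^ 2)) := by
    ext x; rw [aux_gaussianPDFReal_zero_one]; ring
  rw [this, integral_const_mul, aux_integral_lin_exp, mul_zero]

end GaussAux

section OmegaAux
variable {Ω : Type*} [MeasurableSpace Ω] {μ : Measure Ω}

lemma aux_omega_int_sq {U : Ω → ℝ} (hU : Measurable U)
    (hg : Measure.map U μ = gaussianReal 0 1) :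
    Integrable (fun ω => U ω ^ 2) μ :=
  (integrable_map_measure (g := fun x : ℝ => x ^ 2) (f := U)
    (by rw [hg]; exact aux_gauss_integrable_sq.aestronglyMeasurable)
    hU.aemeasurable).mp (by rw [hg]; exact aux_gauss_integrable_sq)

lemma aux_omega_int_id {U : Ω → ℝ} (hU : Measurable U)
    (hg : Measure.map U μ = gaussianReal 0 1) :
    Integrable U μ :=
  (integrable_map_measure (g := fun x : ℝ => x) (f := U)
    (by rw [hg]; exact aux_gauss_integrable_id.aestronglyMeasurable)
    hU.aemeasurable).mp (by rw [hg]; exact aux_gauss_integrable_id)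

lemma aux_omega_moment_sq {U : Ω → ℝ} (hU : Measurable U)
    (hg : Measure.map U μ = gaussianReal 0 1) :
    ∫ ω, U ω ^ 2 ∂μ = 1 := by
  have h := integral_map (f := fun x : ℝ => x ^ 2) hU.aemeasurable
    (by rw [hg]; exact aux_gauss_integrable_sq.aestronglyMeasurable)
  rw [hg, aux_gauss_moment2] at h
  exact h.symm

lemma aux_omega_moment_id {U : Ω → ℝ} (hU : Measurable U)
    (hg : Measure.map U μ = gaussianReal 0 1) :
    ∫ ω, U ω ∂μ = 0 := by
  have h := integral_map (f := fun x : ℝ => x) hU.aemeasurable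
    (by rw [hg]; exact aux_gauss_integrable_id.aestronglyMeasurable)
  rw [hg, aux_gauss_moment1] at h
  exact h.symm

lemma aux_residual_integral (X Y Z : Ω → ℝ)
    (hX : Measurable X) (hY : Measurable Y) (hZ : Measurable Z)
    (hmX : Measure.map X μ = gaussianReal 0 1)
    (hmY : Measure.map Y μ = gaussianReal 0 1)
    (hmZ : Measure.map Z μ = gaussianReal 0 1)
    (hXY : IndepFun X Y μ) (hXZ : IndepFun X Z μ) (hYZ : IndepFun Y Z μ)
    (s p q : ℝ) :
    ∫ ω, (s * X ω + p * Y ω + q * Z ω) ^ 2 ∂μ = s ^ 2 + p ^ 2 + q ^ 2 := by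
  have iX2 := aux_omega_int_sq hX hmX
  have iY2 := aux_omega_int_sq hY hmY
  have iZ2 := aux_omega_int_sq hZ hmZ
  have iX := aux_omega_int_id hX hmX
  have iY := aux_omega_int_id hY hmY
  have iZ := aux_omega_int_id hZ hmZ
  have iXY := hXY.integrable_mul iX iY
  have iXZ := hXZ.integrable_mul iX iZ
  have iYZ := hYZ.integrable_mul iY iZ
  have mXY : ∫ ω, (X * Y) ω ∂μ = 0 := by
    rw [hXY.integral_mul_eq_mul_integral iX.aestronglyMeasurable iY.aestronglyMeasurable,
      aux_omega_moment_id hX hmX, zero_mul]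
  have mXZ : ∫ ω, (X * Z) ω ∂μ = 0 := by
    rw [hXZ.integral_mul_eq_mul_integral iX.aestronglyMeasurable iZ.aestronglyMeasurable,
      aux_omega_moment_id hX hmX, zero_mul]
  have mYZ : ∫ ω, (Y * Z) ω ∂μ = 0 := by
    rw [hYZ.integral_mul_eq_mul_integral iY.aestronglyMeasurable iZ.aestronglyMeasurable,
      aux_omega_moment_id hY hmY, zero_mul]
  have hfe : (fun ω => (s * X ω + p * Y ω + q * Z ω) ^ 2)
      = fun ω => (s ^ 2 * (X ω ^ 2) + p ^ 2 * (Y ω ^ 2) + q ^ 2 * (Z ω ^ 2)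
          + (2 * s * p) * ((X * Y) ω)) + ((2 * s * q) * ((X * Z) ω)
          + (2 * p * q) * ((Y * Z) ω)) := by
    ext ω
    simp only [Pi.mul_apply]
    ring
  rw [hfe]
  have jX : Integrable (fun ω => s ^ 2 * (X ω ^ 2)) μ := by exact iX2.const_mul _
  have jY : Integrable (fun ω => p ^ 2 * (Y ω ^ 2)) μ := by exact iY2.const_mul _
  have jZ : Integrable (fun ω => q ^ 2 * (Z ω ^ 2)) μ := by exact iZ2.const_mul _
  have jXY : Integrable (fun ω => (2 * s * p) * ((X * Y) ω)) μ := by exact iXY.const_mul _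
  have jXZ : Integrable (fun ω => (2 * s * q) * ((X * Z) ω)) μ := by exact iXZ.const_mul _
  have jYZ : Integrable (fun ω => (2 * p * q) * ((Y * Z) ω)) μ := by exact iYZ.const_mul _
  have k1 : Integrable (fun ω => s ^ 2 * (X ω ^ 2) + p ^ 2 * (Y ω ^ 2)) μ := by exact jX.add jY
  have k2 : Integrable (fun ω => s ^ 2 * (X ω ^ 2) + p ^ 2 * (Y ω ^ 2) + q ^ 2 * (Z ω ^ 2)) μ := by
    exact k1.add jZ
  have k3 : Integrable (fun ω => s ^ 2 * (X ω ^ 2) + p ^ 2 * (Y ω ^ 2) + q ^ 2 * (Z ω ^ 2)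
      + (2 * s * p) * ((X * Y) ω)) μ := by exact k2.add jXY
  have k4 : Integrable (fun ω => (2 * s * q) * ((X * Z) ω) + (2 * p * q) * ((Y * Z) ω)) μ := by
    exact jXZ.add jYZ
  rw [integral_add k3 k4, integral_add k2 jXY, integral_add k1 jZ, integral_add jX jY,
    integral_add jXZ jYZ,
    integral_const_mul, integral_const_mul, integral_const_mul, integral_const_mul,
    integral_const_mul, integral_const_mul,
    aux_omega_moment_sq hX hmX, aux_omega_moment_sq hY hmY, aux_omega_moment_sq hZ hmZ,
    mXY, mXZ, mYZ]
  ring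

end OmegaAux

lemma aux_sInf_quad (a c A2 C2 : ℝ) (hA2 : 0 < A2) (hC2 : 0 < C2)
    (hA2e : A2 = 1 - a ^ 2) (hC2e : C2 = 1 - c ^ 2) :
    sInf {e : ℝ | ∃ α γ : ℝ, e = (1 - α * a - γ * c) ^ 2 + α ^ 2 * A2 + γ ^ 2 * C2}
      = A2 * C2 / (A2 + C2 - A2 * C2) := by
  subst hA2e hC2e
  have hD : 0 < (1 - a ^ 2) + (1 - c ^ 2) - (1 - a ^ 2) * (1 - c ^ 2) := by nlinarith
  have hlow : ∀ α γ : ℝ,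
      (1 - a ^ 2) * (1 - c ^ 2) / ((1 - a ^ 2) + (1 - c ^ 2) - (1 - a ^ 2) * (1 - c ^ 2))
      ≤ (1 - α * a - γ * c) ^ 2 + α ^ 2 * (1 - a ^ 2) + γ ^ 2 * (1 - c ^ 2) := by
    intro α γ
    rw [div_le_iff₀ hD]
    nlinarith [mul_nonneg hC2.le (sq_nonneg ((1 - α * a - γ * c) * a - α * (1 - a ^ 2))),
      mul_nonneg hA2.le (sq_nonneg ((1 - α * a - γ * c) * c - γ * (1 - c ^ 2))),
      sq_nonneg (α * c * (1 - a ^ 2) - γ * a * (1 - c ^ 2))]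
  apply le_antisymm
  · apply csInf_le
    · exact ⟨_, by rintro e ⟨α, γ, rfl⟩; exact hlow α γ⟩
    · refine ⟨a * (1 - c ^ 2) / ((1 - a ^ 2) + (1 - c ^ 2) - (1 - a ^ 2) * (1 - c ^ 2)),
        c * (1 - a ^ 2) / ((1 - a ^ 2) + (1 - c ^ 2) - (1 - a ^ 2) * (1 - c ^ 2)), ?_⟩
      field_simp
      ring
  · exact le_csInf ⟨_, ⟨0, 0, rfl⟩⟩ (by rintro e ⟨α, γ, rfl⟩; exact hlow α γ)

lemma aux_tendsto_part (y : ℝ) (hy : y ∈ Set.Ioo (0:ℝ) 1) :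
    Tendsto (fun x : ℝ => 1 - x ^ 2 * y ^ 2 / (x ^ 2 + y ^ 2 - x ^ 2 * y ^ 2))
      (nhdsWithin 0 (Ioi 0)) (nhds 1) := by
  have hy0 : y ≠ 0 := ne_of_gt hy.1
  have hct : ContinuousAt (fun x : ℝ => 1 - x ^ 2 * y ^ 2 / (x ^ 2 + y ^ 2 - x ^ 2 * y ^ 2)) 0 := by
    apply ContinuousAt.sub continuousAt_const
    apply ContinuousAt.div (by fun_prop) (by fun_prop)
    simp [pow_ne_zero, hy0]
  have h := hct.tendsto.mono_left (nhdsWithin_le_nhds (s := Ioi (0:ℝ)))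
  simpa using h

/-- For the confounder SCM with coefficients `a, c ∈ (−1,1) \ {0}` and
`ā = √(1−a²)`, `c̄ = √(1−c²)`, the population `R²` of the hub node `B` given
`(A, C)` is `1 − ā²c̄²/(ā² + c̄² − ā²c̄²)`, and this expression tends to `1` as
`ā → 0⁺` or as `c̄ → 0⁺`: the `R²` of the hub of a confounder can be arbitrarily
close to `1`. -/
theorem confounder_hub_R2_to_one
    {Ω : Type*} [MeasurableSpace Ω] (μ : Measure Ω) [IsProbabilityMeasure μ]
    (a c : ℝ) (ha : a ∈ Set.Ioo (-1 : ℝ) 1) (hc : c ∈ Set.Ioo (-1 : ℝ) 1)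
    (ha0 : a ≠ 0) (hc0 : c ≠ 0)
    (abar cbar : ℝ) (habar : abar = Real.sqrt (1 - a ^ 2))
    (hcbar : cbar = Real.sqrt (1 - c ^ 2))
    (UA UB UC A B C : Ω → ℝ)
    (hmeas : ∀ i, Measurable (![UA, UB, UC] i))
    (hindep : iIndepFun ![UA, UB, UC] μ)
    (hgauss : ∀ i, Measure.map (![UA, UB, UC] i) μ = gaussianReal 0 1)
    (hBdef : B = UB)
    (hAdef : A = fun ω => a * B ω + abar * UA ω)
    (hCdef : C = fun ω => c * B ω + cbar * UC ω) :
    (1 - sInf {e : ℝ | ∃ α γ : ℝ, e = ∫ ω, (B ω - α * A ω - γ * C ω) ^ 2 ∂μ} =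
      1 - abar ^ 2 * cbar ^ 2 / (abar ^ 2 + cbar ^ 2 - abar ^ 2 * cbar ^ 2)) ∧
    (∀ y ∈ Set.Ioo (0 : ℝ) 1,
      Tendsto (fun x : ℝ => 1 - x ^ 2 * y ^ 2 / (x ^ 2 + y ^ 2 - x ^ 2 * y ^ 2))
        (nhdsWithin 0 (Ioi 0)) (nhds 1)) ∧
    (∀ x ∈ Set.Ioo (0 : ℝ) 1,
      Tendsto (fun y : ℝ => 1 - x ^ 2 * y ^ 2 / (x ^ 2 + y ^ 2 - x ^ 2 * y ^ 2))
        (nhdsWithin 0 (Ioi 0)) (nhds 1)) := by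
  have ha2 : (0:ℝ) < 1 - a ^ 2 := by nlinarith [ha.1, ha.2]
  have hc2 : (0:ℝ) < 1 - c ^ 2 := by nlinarith [hc.1, hc.2]
  have habar2 : abar ^ 2 = 1 - a ^ 2 := by rw [habar, Real.sq_sqrt ha2.le]
  have hcbar2 : cbar ^ 2 = 1 - c ^ 2 := by rw [hcbar, Real.sq_sqrt hc2.le]
  have hUA : Measurable UA := hmeas 0
  have hUB : Measurable UB := hmeas 1
  have hUC : Measurable UC := hmeas 2
  have hgA : Measure.map UA μ = gaussianReal 0 1 := hgauss 0
  have hgB : Measure.map UB μ = gaussianReal 0 1 := hgauss 1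
  have hgC : Measure.map UC μ = gaussianReal 0 1 := hgauss 2
  have hBA : IndepFun UB UA μ := hindep.indepFun (show (1 : Fin 3) ≠ 0 by decide)
  have hBC : IndepFun UB UC μ := hindep.indepFun (show (1 : Fin 3) ≠ 2 by decide)
  have hAC : IndepFun UA UC μ := hindep.indepFun (show (0 : Fin 3) ≠ 2 by decide)
  subst hBdef
  refine ⟨?_, fun y hy => aux_tendsto_part y hy,
    fun x hx => (aux_tendsto_part x hx).congr fun t => by ring⟩
  have hval : ∀ α γ : ℝ, ∫ ω, (B ω - α * A ω - γ * C ω) ^ 2 ∂μ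
      = (1 - α * a - γ * c) ^ 2 + α ^ 2 * abar ^ 2 + γ ^ 2 * cbar ^ 2 := by
    intro α γ
    have he : (fun ω => (B ω - α * A ω - γ * C ω) ^ 2)
        = fun ω => ((1 - α * a - γ * c) * B ω + (-(α * abar)) * UA ω
            + (-(γ * cbar)) * UC ω) ^ 2 := by
      ext ω
      rw [hAdef, hCdef]
      ring
    rw [he, aux_residual_integral B UA UC hUB hUA hUC hgB hgA hgC hBA hBC hAC]
    ring
  have hset : {e : ℝ | ∃ α γ : ℝ, e = ∫ ω, (B ω - α * A ω - γ * C ω) ^ 2 ∂μ}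
      = {e : ℝ | ∃ α γ : ℝ,
          e = (1 - α * a - γ * c) ^ 2 + α ^ 2 * abar ^ 2 + γ ^ 2 * cbar ^ 2} := by
    ext e
    constructor
    · rintro ⟨α, γ, rfl⟩; exact ⟨α, γ, hval α γ⟩
    · rintro ⟨α, γ, rfl⟩; exact ⟨α, γ, (hval α γ).symm⟩
  rw [hset, aux_sInf_quad a c (abar ^ 2) (cbar ^ 2) (by rw [habar2]; exact ha2)
    (by rw [hcbar2]; exact hc2) habar2 hcbar2]
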